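/- Suppose that for every m ∈ ℕ there exists a probability-measure-preserving F₂-system (X_m, μ_m) and a non-negative f_m ∈ L^∞(X_m) with ‖f_m‖_{L¹} ≤ 2^{−m} and sup_n 𝒜_{2n} f_m(x) ≥ 1 − 2^{−m} for all x outside a set of measure 2^{−m}. Then on the product system X = ∏_m X_m with product measure and diagonal (coordinatewise) F₂-action, the function f := Σ_m m·f̃_m (where f̃_m is the lift of f_m to X) lies in L¹(X) and satisfies sup_n 𝒜_{2n} f(x) = +∞ for almost every x ∈ X. -/

import Mathlib

open MeasureTheory
open scoped ENNReal NNReal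

/-- The spherical averaging operator
`𝒜_n f(x) = (4·3^{n-1})⁻¹ Σ_{|g| = n} f(T_g⁻¹ x)`. -/
noncomputable def sphAvg {X : Type*} (T : FreeGroup (Fin 2) → X → X) (n : ℕ)
    (f : X → ℝ) (x : X) : ℝ :=
  (4 * 3 ^ (n - 1) : ℝ)⁻¹ *
    ∑ᶠ (g : FreeGroup (Fin 2)) (_ : FreeGroup.norm g = n), f (T g⁻¹ x)

lemma sphere_finite (n : ℕ) : {g : FreeGroup (Fin 2) | FreeGroup.norm g = n}.Finite := by
  have h : {g : FreeGroup (Fin 2) | FreeGroup.norm g = n} ⊆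
      FreeGroup.toWord ⁻¹' {l : List (Fin 2 × Bool) | l.length = n} := fun g hg => hg
  exact Set.Finite.subset (Set.Finite.preimage
    (FreeGroup.toWord_injective.injOn) (List.finite_length_eq _ n)) h

lemma sphAvg_eq_sum {X : Type*} (T : FreeGroup (Fin 2) → X → X) (n : ℕ) (f : X → ℝ) (x : X) :
    sphAvg T n f x = (4 * 3 ^ (n - 1) : ℝ)⁻¹ *
      ∑ g ∈ (sphere_finite n).toFinset, f (T g⁻¹ x) := by
  rw [sphAvg]
  congr 1
  exact finsum_mem_eq_finite_toFinset_sum (fun g => f (T g⁻¹ x)) (sphere_finite n)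

instance : Countable (FreeGroup (Fin 2)) :=
  Function.Injective.countable FreeGroup.toWord_injective

lemma sphAvg_measurable {X : Type*} [MeasurableSpace X] {T : FreeGroup (Fin 2) → X → X}
    (hT : ∀ g, Measurable (T g)) (n : ℕ) {f : X → ℝ} (hf : Measurable f) :
    Measurable (sphAvg T n f) := by
  have h : sphAvg T n f = fun x => (4 * 3 ^ (n - 1) : ℝ)⁻¹ *
      ∑ g ∈ (sphere_finite n).toFinset, f (T g⁻¹ x) := funext (sphAvg_eq_sum T n f)
  rw [h]
  exact (Finset.measurable_sum _ fun g _ => hf.comp (hT g⁻¹)).const_mul _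

lemma sphAvg_mono {X : Type*} (T : FreeGroup (Fin 2) → X → X) (n : ℕ) {f h : X → ℝ} (x : X)
    (hle : ∀ g : FreeGroup (Fin 2), f (T g⁻¹ x) ≤ h (T g⁻¹ x)) :
    sphAvg T n f x ≤ sphAvg T n h x := by
  rw [sphAvg_eq_sum, sphAvg_eq_sum]
  refine mul_le_mul_of_nonneg_left (Finset.sum_le_sum fun g _ => hle g) ?_
  positivity

lemma sphAvg_const_mul {X : ℕ → Type} (T : ∀ m, FreeGroup (Fin 2) → X m → X m) (m n : ℕ)
    (f : ∀ m, X m → ℝ) (x : ∀ m, X m) :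
    (m : ℝ) * sphAvg (T m) n (f m) (x m) =
      sphAvg (fun g y k => T k g (y k)) n (fun y => (m : ℝ) * f m (y m)) x := by
  rw [sphAvg_eq_sum, sphAvg_eq_sum, mul_left_comm, Finset.mul_sum]

/-- Borel–Cantelli step: given for each `m` a probability-measure-preserving `F₂`-system
`(X_m, μ_m)` and non-negative `f_m ∈ L^∞(X_m)` with `‖f_m‖₁ ≤ 2^{−m}` and
`sup_n 𝒜_{2n} f_m ≥ 1 − 2^{−m}` off a set of measure `2^{−m}`, the function
`f = Σ_m m·f̃_m` on the product system (with the product measure, characterized by its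
finite-dimensional marginals, and the coordinatewise `F₂`-action) lies in `L¹` and has
`sup_n 𝒜_{2n} f = +∞` almost everywhere. -/
theorem product_system_unbounded_averages
    (X : ℕ → Type) [∀ m, MeasurableSpace (X m)]
    (μ : ∀ m, Measure (X m)) [∀ m, IsProbabilityMeasure (μ m)]
    (T : ∀ m, FreeGroup (Fin 2) → X m → X m)
    (hT1 : ∀ m, T m 1 = id)
    (hTmul : ∀ m, ∀ g h : FreeGroup (Fin 2), T m (g * h) = T m g ∘ T m h)
    (hTmp : ∀ m, ∀ g : FreeGroup (Fin 2), MeasurePreserving (T m g) (μ m) (μ m))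
    (f : ∀ m, X m → ℝ)
    (hfmeas : ∀ m, Measurable (f m)) (hf0 : ∀ m x, 0 ≤ f m x)
    (hfbd : ∀ m, ∃ C : ℝ, ∀ x, f m x ≤ C)
    (hfL1 : ∀ m, ∫ x, f m x ∂(μ m) ≤ (1 / 2 : ℝ) ^ m)
    (hfmax : ∀ m, μ m {x | ¬ ((1 - (1 / 2 : ℝ) ^ m : ℝ) : EReal) ≤
        ⨆ n : ℕ, ((sphAvg (T m) (2 * n) (f m) x : ℝ) : EReal)} ≤ (1 / 2 : ENNReal) ^ m)
    -- the product measure on `Π m, X m`, characterized by its finite marginals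
    (μprod : Measure (∀ m, X m)) (hprob : IsProbabilityMeasure μprod)
    (hmarg : ∀ s : Finset ℕ, μprod.map (fun x (i : s) => x i) =
      Measure.pi (fun i : s => μ i)) :
    Integrable (fun x : ∀ m, X m => ∑' m : ℕ, (m : ℝ) * f m (x m)) μprod ∧
    ∀ᵐ x ∂μprod, (⨆ n : ℕ, ((sphAvg (fun g y m => T m g (y m)) (2 * n)
        (fun y : ∀ m, X m => ∑' m : ℕ, (m : ℝ) * f m (y m)) x : ℝ) : EReal)) = ⊤ := by
  classical
  set Td : FreeGroup (Fin 2) → (∀ m, X m) → ∀ m, X m := fun g y m => T m g (y m) with hTd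
  set F : (∀ m, X m) → ℝ := fun x => ∑' m : ℕ, (m : ℝ) * f m (x m) with hF
  have hlim : IsProjectiveLimit μprod
      (fun s : Finset ℕ => Measure.pi fun i : s => μ i) := fun s => hmarg s
  -- single-coordinate marginals
  have hmargm : ∀ m, μprod.map (fun x : ∀ k, X k => x m) = μ m := by
    intro m
    letI : Unique (({m} : Finset ℕ)) :=
      ⟨⟨⟨m, Finset.mem_singleton_self m⟩⟩, by
        rintro ⟨a, ha⟩; ext; simpa using ha⟩
    have h2 : (fun x : ∀ k, X k => x m) =
        (fun y : ∀ i : ({m} : Finset ℕ), X i.1 => y default) ∘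
          ({m} : Finset ℕ).restrict := rfl
    rw [h2, ← Measure.map_map (measurable_pi_apply default)
      (Finset.measurable_restrict {m}), hlim {m}]
    exact (measurePreserving_piUnique (fun i : ({m} : Finset ℕ) => μ i)).map_eq
  have hmp_eval : ∀ m, MeasurePreserving (fun x : ∀ k, X k => x m) μprod (μ m) :=
    fun m => ⟨measurable_pi_apply m, hmargm m⟩
  -- diagonal action is measure preserving
  have hTdmeas : ∀ g, Measurable (Td g) :=
    fun g => measurable_pi_lambda _ fun m => (hTmp m g).measurable.comp (measurable_pi_apply m)
  have hTdmp : ∀ g, MeasurePreserving (Td g) μprod μprod := by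
    intro g
    refine ⟨hTdmeas g, ?_⟩
    have hlim2 : IsProjectiveLimit (μprod.map (Td g))
        (fun s : Finset ℕ => Measure.pi fun i : s => μ i) := by
      intro s
      rw [Measure.map_map (Finset.measurable_restrict s) (hTdmeas g)]
      have hcomp : (s.restrict ∘ Td g) =
          (fun (a : ∀ i : s, X i) (i : s) => T i g (a i)) ∘ s.restrict := rfl
      have hpimap : Measurable (fun (a : ∀ i : s, X i) (i : s) => T i g (a i)) :=
        measurable_pi_lambda _ fun i => (hTmp i g).measurable.comp (measurable_pi_apply i)
      rw [hcomp, ← Measure.map_map hpimap (Finset.measurable_restrict s), hlim s]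
      exact (measurePreserving_pi (fun i : s => μ i) (fun i : s => μ i)
        fun i => hTmp i g).map_eq
    exact hlim2.unique hlim
  -- integrability of each summand on the factors
  have hint : ∀ m : ℕ, Integrable (fun y => (m : ℝ) * f m y) (μ m) := by
    intro m
    obtain ⟨C, hC⟩ := hfbd m
    have hne : Nonempty (X m) := by
      by_contra h
      rw [not_nonempty_iff] at h
      have h1 : (μ m) Set.univ = 1 := measure_univ
      rw [Set.univ_eq_empty_iff.mpr h, measure_empty] at h1
      exact zero_ne_one h1
    refine (integrable_const ((m : ℝ) * C)).mono'
      (((hfmeas m).const_mul _).aestronglyMeasurable) (ae_of_all _ fun y => ?_)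
    rw [Real.norm_eq_abs, abs_of_nonneg (mul_nonneg (Nat.cast_nonneg m) (hf0 m y))]
    exact mul_le_mul_of_nonneg_left (hC y) (Nat.cast_nonneg m)
  -- the ENNReal-valued summands
  set G : ℕ → (∀ k, X k) → ℝ≥0∞ := fun m x => ((‖(m : ℝ) * f m (x m)‖₊ : ℝ≥0) : ℝ≥0∞) with hG
  have hGmeas : ∀ m, Measurable (G m) := fun m =>
    (((hfmeas m).comp (measurable_pi_apply m)).const_mul _).nnnorm.coe_nnreal_ennreal
  have hLint : ∀ m : ℕ, ∫⁻ x, G m x ∂μprod ≤ ENNReal.ofReal ((m : ℝ) * (1 / 2) ^ m) := by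
    intro m
    have h1 : ∫⁻ x, G m x ∂μprod = ∫⁻ y, ((‖(m : ℝ) * f m y‖₊ : ℝ≥0) : ℝ≥0∞) ∂(μ m) :=
      (hmp_eval m).lintegral_comp (((hfmeas m).const_mul _).nnnorm.coe_nnreal_ennreal)
    have h2 : ∀ y, ((‖(m : ℝ) * f m y‖₊ : ℝ≥0) : ℝ≥0∞) = ENNReal.ofReal ((m : ℝ) * f m y) :=
      fun y => Real.enorm_eq_ofReal (mul_nonneg (Nat.cast_nonneg m) (hf0 m y))
    rw [h1, lintegral_congr h2,
      ← ofReal_integral_eq_lintegral_ofReal (hint m)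
        (ae_of_all _ fun y => mul_nonneg (Nat.cast_nonneg m) (hf0 m y))]
    apply ENNReal.ofReal_le_ofReal
    rw [integral_const_mul]
    exact mul_le_mul_of_nonneg_left (hfL1 m) (Nat.cast_nonneg m)
  have hsum_series : Summable (fun m : ℕ => (m : ℝ) * (1 / 2) ^ m) := by
    have := summable_pow_mul_geometric_of_norm_lt_one (R := ℝ) 1
      (r := (1 / 2 : ℝ)) (by rw [Real.norm_eq_abs, abs_lt]; constructor <;> norm_num)
    simpa using this
  have htotal : ∑' m, ∫⁻ x, G m x ∂μprod ≠ ⊤ := by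
    refine ne_top_of_le_ne_top ?_ (ENNReal.tsum_le_tsum hLint)
    rw [← ENNReal.ofReal_tsum_of_nonneg
      (fun m => mul_nonneg (Nat.cast_nonneg m) (by positivity)) hsum_series]
    exact ENNReal.ofReal_ne_top
  have hlintsum : ∫⁻ x, ∑' m, G m x ∂μprod ≠ ⊤ := by
    rw [lintegral_tsum (fun m => (hGmeas m).aemeasurable)]; exact htotal
  -- the null set where the series fails to be summable
  set N : Set (∀ k, X k) := {x | ∑' m, G m x = ⊤} with hN
  have hNmeas : MeasurableSet N :=
    (Measurable.ennreal_tsum hGmeas) (measurableSet_singleton ⊤)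
  have hN0 : μprod N = 0 := by
    have h := ae_lt_top (Measurable.ennreal_tsum hGmeas) hlintsum
    rw [ae_iff] at h
    simpa [N, lt_top_iff_ne_top] using h
  have hNsum : ∀ x, x ∉ N → Summable (fun m : ℕ => (m : ℝ) * f m (x m)) := by
    intro x hx
    have h1 : Summable (fun m : ℕ => ‖(m : ℝ) * f m (x m)‖₊) :=
      ENNReal.tsum_coe_ne_top_iff_summable.mp hx
    have h2 : Summable (fun m : ℕ => ‖(m : ℝ) * f m (x m)‖) := by
      simpa [← coe_nnnorm] using NNReal.summable_coe.mpr h1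
    exact h2.of_norm
  -- a.e. summability along the whole orbit
  have hsum_all : ∀ᵐ x ∂μprod, ∀ g : FreeGroup (Fin 2), Td g⁻¹ x ∉ N := by
    rw [ae_all_iff]
    intro g
    have h0 : μprod ((Td g⁻¹) ⁻¹' N) = 0 := by
      have h := Measure.map_apply (hTdmeas g⁻¹) hNmeas (μ := μprod)
      rw [(hTdmp g⁻¹).map_eq] at h
      rw [← h, hN0]
    rw [ae_iff]
    simp only [not_not]; exact h0
  -- measurability and integrability of F
  have habs : ∀ (x : ∀ k, X k) (m : ℕ), ((‖(m : ℝ) * f m (x m)‖₊ : ℝ≥0) : ℝ) = (m : ℝ) * f m (x m) := by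
    intro x m
    rw [coe_nnnorm, Real.norm_eq_abs,
      abs_of_nonneg (mul_nonneg (Nat.cast_nonneg m) (hf0 m (x m)))]
  have hF_eq : ∀ x, F x = ((∑' m : ℕ, ‖(m : ℝ) * f m (x m)‖₊ : ℝ≥0) : ℝ) := by
    intro x
    rw [NNReal.coe_tsum]
    exact (tsum_congr (habs x)).symm
  have hFmeas : Measurable F := by
    have : F = fun x => ((∑' m : ℕ, ‖(m : ℝ) * f m (x m)‖₊ : ℝ≥0) : ℝ) := funext hF_eq
    rw [this]
    exact (Measurable.nnreal_tsum fun m : ℕ =>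
      (((hfmeas m).comp (measurable_pi_apply m)).const_mul _).nnnorm).coe_nnreal_real
  have hptwise : ∀ x, ((‖F x‖₊ : ℝ≥0) : ℝ≥0∞) ≤ ∑' m, G m x := by
    intro x
    have h1 : ‖F x‖₊ = ∑' m : ℕ, ‖(m : ℝ) * f m (x m)‖₊ := by
      rw [hF_eq x, NNReal.nnnorm_eq]
    rw [h1]
    by_cases h : Summable (fun m : ℕ => ‖(m : ℝ) * f m (x m)‖₊)
    · rw [ENNReal.coe_tsum h]
    · rw [tsum_eq_zero_of_not_summable h]; simp
  have hFint : Integrable F μprod := by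
    refine ⟨hFmeas.aestronglyMeasurable, ?_⟩
    exact lt_of_le_of_lt (lintegral_mono hptwise) hlintsum.lt_top
  refine ⟨hFint, ?_⟩
  -- Borel–Cantelli
  set B : ∀ m, Set (X m) := fun m => {y | ¬ ((1 - (1 / 2 : ℝ) ^ m : ℝ) : EReal) ≤
      ⨆ n : ℕ, ((sphAvg (T m) (2 * n) (f m) y : ℝ) : EReal)} with hB
  have hBmeas : ∀ m, MeasurableSet (B m) := by
    intro m
    have hsup : Measurable fun y : X m =>
        ⨆ n : ℕ, ((sphAvg (T m) (2 * n) (f m) y : ℝ) : EReal) :=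
      Measurable.iSup fun n => measurable_coe_real_ereal.comp
        (sphAvg_measurable (fun g => (hTmp m g).measurable) (2 * n) (hfmeas m))
    have : B m = {y | (⨆ n : ℕ, ((sphAvg (T m) (2 * n) (f m) y : ℝ) : EReal)) <
        ((1 - (1 / 2 : ℝ) ^ m : ℝ) : EReal)} := by
      ext y; simp [B, not_le]
    rw [this]
    exact measurableSet_lt hsup measurable_const
  have hEbound : ∀ m, μprod ((fun x : ∀ k, X k => x m) ⁻¹' B m) ≤ (1 / 2 : ENNReal) ^ m := by
    intro m
    rw [← Measure.map_apply (measurable_pi_apply m) (hBmeas m), hmargm m]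
    exact hfmax m
  have hBC : ∀ᵐ x ∂μprod, ∀ᶠ m in Filter.atTop, x ∉ (fun x : ∀ k, X k => x m) ⁻¹' B m := by
    refine ae_eventually_notMem ?_
    refine ne_top_of_le_ne_top ?_ (ENNReal.tsum_le_tsum hEbound)
    rw [ENNReal.tsum_geometric]
    simp only [ne_eq, ENNReal.inv_eq_top]
    intro h
    have h1 : (1 : ℝ≥0∞) = 1 / 2 + 1 / 2 := by
      rw [ENNReal.div_add_div_same, one_add_one_eq_two]
      exact (ENNReal.div_self (by norm_num) (by norm_num)).symm
    have : (1 : ℝ≥0∞) - 1 / 2 = 1 / 2 := ENNReal.sub_eq_of_eq_add (by norm_num) h1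
    rw [this] at h
    norm_num at h
  -- conclusion
  filter_upwards [hsum_all, hBC] with x hx hev
  rw [iSup_eq_top]
  intro b hb
  obtain ⟨c, hbc, -⟩ := EReal.lt_iff_exists_real_btwn.mp hb
  obtain ⟨M, hM⟩ := Filter.eventually_atTop.mp hev
  set m : ℕ := max M (Nat.ceil (4 * c) + 1) with hm
  have hmM : M ≤ m := le_max_left _ _
  have hm1 : 1 ≤ m := le_trans (Nat.le_add_left 1 _) (le_max_right _ _)
  have hmc : 4 * c < (m : ℝ) := by
    have h1 : (Nat.ceil (4 * c) + 1 : ℕ) ≤ m := le_max_right _ _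
    have h2 : (4 * c : ℝ) ≤ Nat.ceil (4 * c) := Nat.le_ceil _
    have h3 : ((Nat.ceil (4 * c) + 1 : ℕ) : ℝ) ≤ (m : ℝ) := Nat.cast_le.mpr h1
    push_cast at h3
    linarith
  have hxm := hM m hmM
  simp only [Set.mem_preimage, B, Set.mem_setOf_eq, not_not] at hxm
  -- extract a good sphere radius
  have h14 : ((1 / 4 : ℝ) : EReal) <
      ⨆ n : ℕ, ((sphAvg (T m) (2 * n) (f m) (x m) : ℝ) : EReal) := by
    refine lt_of_lt_of_le ?_ hxm
    rw [EReal.coe_lt_coe_iff]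
    have : (1 / 2 : ℝ) ^ m ≤ (1 / 2) ^ 1 :=
      pow_le_pow_of_le_one (by norm_num) (by norm_num) hm1
    norm_num at this ⊢
    linarith
  rw [lt_iSup_iff] at h14
  obtain ⟨n, hn⟩ := h14
  rw [EReal.coe_lt_coe_iff] at hn
  -- the key comparison
  have hkey : (m : ℝ) * sphAvg (T m) (2 * n) (f m) (x m) ≤ sphAvg Td (2 * n) F x := by
    rw [sphAvg_const_mul]
    refine sphAvg_mono _ _ _ fun g => ?_
    have hsumm : Summable (fun k : ℕ => (k : ℝ) * f k ((Td g⁻¹ x) k)) := hNsum _ (hx g)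
    exact hsumm.le_tsum m fun j _ => mul_nonneg (Nat.cast_nonneg j) (hf0 j _)
  refine ⟨n, lt_trans hbc ?_⟩
  rw [EReal.coe_lt_coe_iff]
  have hm1' : (1 : ℝ) ≤ (m : ℝ) := by exact_mod_cast hm1
  nlinarith [hkey, hn, hmc, hm1']
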